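/- arXiv:2109.01494 — 3 statements merged into one kernel-verified Lean document; each statement's English description precedes it below -/
import Mathlib

section
/- Under reservoir sampling with budget b, the variance of the subgraph-count estimator N^F_G satisfies Var[N^F_G] ≤ |H^F_G|^2 · ∏_{i=0}^{|E_F|-2} (|E_G| - i)/(b - i), for b ≥ |E_F| - 1. -/
open MeasureTheory ProbabilityTheory

lemma aux_evariance_eq_sq {Ω : Type*} [MeasurableSpace Ω] (X : Ω → ℝ) (μ : Measure Ω) :
    evariance X μ = eLpNorm (fun ω => X ω - μ[X]) 2 μ ^ 2 := by
  rw [eLpNorm_eq_lintegral_rpow_enorm_toReal two_ne_zero ENNReal.ofNat_ne_top,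
    ← ENNReal.rpow_natCast _ 2, ← ENNReal.rpow_mul]
  simp only [ENNReal.toReal_ofNat, one_div, Nat.cast_ofNat]
  rw [inv_mul_cancel₀ (two_ne_zero : (2:ℝ) ≠ 0), ENNReal.rpow_one]
  unfold evariance
  congr 1
  ext ω
  rw [← ENNReal.rpow_two]

lemma aux_variance_sum_le {Ω : Type*} [MeasurableSpace Ω] (μ : Measure Ω) [IsProbabilityMeasure μ]
    {ι : Type*} (s : Finset ι) (X : ι → Ω → ℝ) (hX : ∀ i ∈ s, MemLp (X i) 2 μ) :
    variance (fun ω => ∑ i ∈ s, X i ω) μ ≤ (∑ i ∈ s, Real.sqrt (variance (X i) μ)) ^ 2 := by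
  set Y : ι → Ω → ℝ := fun i ω => X i ω - μ[X i] with hY
  have hYm : ∀ i ∈ s, MemLp (Y i) 2 μ := fun i hi => (hX i hi).sub (memLp_const _)
  have hint : μ[fun ω => ∑ i ∈ s, X i ω] = ∑ i ∈ s, μ[X i] :=
    integral_finset_sum s (fun i hi => (hX i hi).integrable one_le_two)
  have hkey : (fun ω => (∑ i ∈ s, X i ω) - μ[fun ω => ∑ i ∈ s, X i ω]) = ∑ i ∈ s, Y i := by
    funext ω
    simp only [hint, Finset.sum_apply, hY, Finset.sum_sub_distrib]
  have h1 : evariance (fun ω => ∑ i ∈ s, X i ω) μ ≤ (∑ i ∈ s, eLpNorm (Y i) 2 μ) ^ 2 := by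
    rw [aux_evariance_eq_sq, hkey]
    exact pow_le_pow_left' (eLpNorm_sum_le (fun i hi => (hYm i hi).1) one_le_two) 2
  have hfin : (∑ i ∈ s, eLpNorm (Y i) 2 μ) ^ 2 ≠ ⊤ := by
    apply ENNReal.pow_ne_top
    exact (ENNReal.sum_lt_top.2 fun i hi => (hYm i hi).2).ne
  have h2 : variance (fun ω => ∑ i ∈ s, X i ω) μ ≤ ((∑ i ∈ s, eLpNorm (Y i) 2 μ) ^ 2).toReal :=
    ENNReal.toReal_mono hfin h1
  refine h2.trans_eq ?_
  rw [ENNReal.toReal_pow, ENNReal.toReal_sum (fun i hi => (hYm i hi).2.ne)]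
  congr 1
  apply Finset.sum_congr rfl
  intro i hi
  have : variance (X i) μ = ((eLpNorm (Y i) 2 μ).toReal) ^ 2 := by
    rw [variance, aux_evariance_eq_sq, ENNReal.toReal_pow]
  rw [this, Real.sqrt_sq ENNReal.toReal_nonneg]

lemma aux_bernoulli_variance {Ω : Type*} [MeasurableSpace Ω] (μ : Measure Ω)
    [IsProbabilityMeasure μ] (X : Ω → ℝ) (p : ℝ) (hp0 : 0 < p) (hp1 : p ≤ 1)
    (hX : MemLp X 2 μ)
    (hA : μ {ω | X ω = 1/p} = ENNReal.ofReal p)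
    (hB : μ {ω | X ω = 0} = ENNReal.ofReal (1-p)) :
    variance X μ = 1/p - 1 := by
  have hXm := hX.1
  set X' := hXm.mk X with hX'def
  have hXX' : X =ᵐ[μ] X' := hXm.ae_eq_mk
  have hX'm : Measurable X' := hXm.stronglyMeasurable_mk.measurable
  set A : Set Ω := {ω | X' ω = 1/p} with hAdef
  set B : Set Ω := {ω | X' ω = 0} with hBdef
  have hAm : MeasurableSet A := hX'm (measurableSet_singleton _)
  have hBm : MeasurableSet B := hX'm (measurableSet_singleton _)
  have hApeq : {ω | X ω = 1/p} =ᵐ[μ] A := by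
    filter_upwards [hXX'] with ω hω
    change (X ω = 1/p) = (X' ω = 1/p)
    rw [hω]
  have hBpeq : {ω | X ω = 0} =ᵐ[μ] B := by
    filter_upwards [hXX'] with ω hω
    change (X ω = 0) = (X' ω = 0)
    rw [hω]
  have hmuA : μ A = ENNReal.ofReal p := by rw [← measure_congr hApeq, hA]
  have hmuB : μ B = ENNReal.ofReal (1-p) := by rw [← measure_congr hBpeq, hB]
  have hABdisj : Disjoint A B := by
    rw [Set.disjoint_left]
    intro ω hωA hωB
    rw [hAdef, Set.mem_setOf_eq] at hωA
    rw [hBdef, Set.mem_setOf_eq] at hωB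
    rw [hωA] at hωB
    exact (one_div_ne_zero hp0.ne') hωB
  have hmuAB : μ (A ∪ B) = 1 := by
    rw [measure_union hABdisj hBm, hmuA, hmuB, ← ENNReal.ofReal_add hp0.le (by linarith)]
    norm_num
  have hcompl : μ (A ∪ B)ᶜ = 0 := by
    rw [measure_compl (hAm.union hBm) (measure_ne_top _ _), hmuAB, measure_univ, tsub_self]
  have hae : ∀ᵐ ω ∂μ, ω ∈ A ∪ B := MeasureTheory.mem_ae_iff.mpr hcompl
  -- X is a.e. equal to (1/p) * indicator of A
  have hXg : X =ᵐ[μ] A.indicator (fun _ => 1/p) := by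
    filter_upwards [hXX', hae] with ω hω hmem
    rcases hmem with hωA | hωB
    · rw [Set.indicator_of_mem hωA, hω]; exact hωA
    · have hωnA : ω ∉ A := fun hc => (one_div_ne_zero hp0.ne') (hc ▸ hωB)
      rw [Set.indicator_of_notMem hωnA, hω]; exact hωB
  have hEX : μ[X] = 1 := by
    rw [integral_congr_ae hXg, integral_indicator_const _ hAm, measureReal_def, hmuA,
      ENNReal.toReal_ofReal hp0.le, smul_eq_mul]
    field_simp
  have hXsq : (X ^ 2 : Ω → ℝ) =ᵐ[μ] A.indicator (fun _ => (1/p)^2) := by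
    filter_upwards [hXg] with ω hω
    simp only [Pi.pow_apply, hω]
    by_cases hωA : ω ∈ A
    · rw [Set.indicator_of_mem hωA, Set.indicator_of_mem hωA]
    · rw [Set.indicator_of_notMem hωA, Set.indicator_of_notMem hωA]; ring
  have hEX2 : μ[X ^ 2] = 1/p := by
    rw [integral_congr_ae hXsq, integral_indicator_const _ hAm, measureReal_def, hmuA,
      ENNReal.toReal_ofReal hp0.le, smul_eq_mul]
    field_simp
  rw [variance_eq_sub hX, hEX, hEX2]
  norm_num

lemma aux_card_le {V W : Type*} [Fintype V] [DecidableEq V] [Fintype W] [DecidableEq W]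
    (G : SimpleGraph V) [DecidableRel G.Adj] (F : SimpleGraph W) [DecidableRel F.Adj]
    (h : G.Subgraph) (iso : h.coe ≃g F) :
    F.edgeFinset.card ≤ G.edgeFinset.card := by
  classical
  have h1 : Nat.card F.edgeSet = Nat.card h.coe.edgeSet := Nat.card_congr iso.mapEdgeSet.symm
  have hinj : Function.Injective (h.hom) := Subtype.val_injective
  have h2 : Nat.card h.coe.edgeSet ≤ Nat.card G.edgeSet :=
    Nat.card_le_card_of_injective _ (SimpleGraph.Hom.mapEdgeSet.injective h.hom hinj)
  have h3 : Nat.card F.edgeSet = F.edgeFinset.card := by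
    rw [Nat.card_coe_set_eq, Set.ncard_eq_toFinset_card']; exact congrArg Finset.card (by ext; simp)
  have h4 : Nat.card G.edgeSet = G.edgeFinset.card := by
    rw [Nat.card_coe_set_eq, Set.ncard_eq_toFinset_card']; exact congrArg Finset.card (by ext; simp)
  omega

/-- Variance bound for the reservoir-sampling subgraph-count estimator.
The stream has `m = |E_G|` edges, the pattern `F` has `k = |E_F|` edges, the budget is
`b ≥ k - 1`.  Each estimator variable `X h` (for a copy `h ∈ H^F_G`) takes value `1 / p h`
with probability `p h` and `0` otherwise, where `p h` is at least the final-time detection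
probability `min 1 (∏_{i=0}^{k-2} (b - i) / (m - 1 - i))`.  Then the variance of the
total estimator `N^F_G = ∑ h, X h` is at most `|H^F_G|² · ∏_{i=0}^{k-2} (m - i)/(b - i)`. -/
theorem streaming_subgraph_estimator_variance_bound
    {V W : Type*} [Fintype V] [DecidableEq V] [Fintype W] [DecidableEq W]
    (G : SimpleGraph V) [DecidableRel G.Adj] (F : SimpleGraph W) [DecidableRel F.Adj]
    {Ω : Type*} [MeasurableSpace Ω] (μ : Measure Ω) [IsProbabilityMeasure μ]
    (H : Finset G.Subgraph)
    (hH : ∀ h : G.Subgraph, h ∈ H ↔ Nonempty (h.coe ≃g F))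
    (X : G.Subgraph → Ω → ℝ) (p : G.Subgraph → ℝ)
    (m k b : ℕ) (hm : m = G.edgeFinset.card) (hk : k = F.edgeFinset.card)
    (hk1 : 1 ≤ k) (hb : k - 1 ≤ b)
    (hL2 : ∀ h ∈ H, MemLp (X h) 2 μ)
    (hp : ∀ h ∈ H, 0 < p h ∧ p h ≤ 1)
    (hplb : ∀ h ∈ H,
      min 1 (∏ i ∈ Finset.range (k - 1), ((b : ℝ) - i) / ((m : ℝ) - 1 - i)) ≤ p h)
    (hdetect : ∀ h ∈ H, μ {ω | X h ω = 1 / p h} = ENNReal.ofReal (p h))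
    (hmiss : ∀ h ∈ H, μ {ω | X h ω = 0} = ENNReal.ofReal (1 - p h)) :
    variance (fun ω => ∑ h ∈ H, X h ω) μ ≤
      (H.card : ℝ) ^ 2 * ∏ i ∈ Finset.range (k - 1), ((m : ℝ) - i) / ((b : ℝ) - i) := by
  classical
  rcases H.eq_empty_or_nonempty with hE | ⟨h0, hh0⟩
  · subst hE
    rw [show (fun _ : Ω => ∑ h ∈ (∅:Finset G.Subgraph), X h _) = (0 : Ω → ℝ) by
      funext ω; simp]
    simp [variance_zero]
  · obtain ⟨iso⟩ := (hH h0).mp hh0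
    have hkm : k ≤ m := by rw [hm, hk]; exact aux_card_le G F h0 iso
    set P : ℝ := ∏ i ∈ Finset.range (k-1), ((m:ℝ) - i)/((b:ℝ) - i) with hPdef
    have hfac : ∀ i ∈ Finset.range (k-1), (0:ℝ) < (b:ℝ) - i ∧ (0:ℝ) < (m:ℝ)-1-i := by
      intro i hi
      rw [Finset.mem_range] at hi
      have hib : i + 1 ≤ b := by omega
      have him : i + 2 ≤ m := by omega
      have hib' : (i:ℝ) + 1 ≤ b := by exact_mod_cast hib
      have him' : (i:ℝ) + 2 ≤ m := by exact_mod_cast him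
      constructor <;> linarith
    have hPnonneg : 0 ≤ P :=
      Finset.prod_nonneg fun i hi =>
        div_nonneg (by linarith [(hfac i hi).2]) (le_of_lt (hfac i hi).1)
    have hP' : ∏ i ∈ Finset.range (k-1), ((m:ℝ)-1-i)/((b:ℝ)-i) ≤ P := by
      apply Finset.prod_le_prod
      · intro i hi
        exact div_nonneg (le_of_lt (hfac i hi).2) (le_of_lt (hfac i hi).1)
      · intro i hi
        have h1 := (hfac i hi).1
        have h2 := (hfac i hi).2
        exact div_le_div₀ (by linarith) (by linarith) h1 le_rfl
    set Q : ℝ := ∏ i ∈ Finset.range (k-1), ((b:ℝ)-i)/((m:ℝ)-1-i) with hQdef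
    have hQpos : 0 < Q :=
      Finset.prod_pos fun i hi => div_pos (hfac i hi).1 (hfac i hi).2
    have hQinv : 1 / Q = ∏ i ∈ Finset.range (k-1), ((m:ℝ)-1-i)/((b:ℝ)-i) := by
      rw [hQdef, one_div, ← Finset.prod_inv_distrib]
      exact Finset.prod_congr rfl fun i hi => by rw [inv_div]
    have hvar : ∀ h ∈ H, variance (X h) μ ≤ P := by
      intro h hh
      obtain ⟨hph0, hph1⟩ := hp h hh
      have hveq : variance (X h) μ = 1 / p h - 1 :=
        aux_bernoulli_variance μ (X h) (p h) hph0 hph1 (hL2 h hh) (hdetect h hh) (hmiss h hh)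
      rw [hveq]
      rcases le_or_gt 1 Q with hQ1 | hQ1
      · have hpe : p h = 1 := le_antisymm hph1 (by
          have := hplb h hh; rwa [min_eq_left hQ1] at this)
        rw [hpe]; simpa using hPnonneg
      · have hpge : Q ≤ p h := by
          have := hplb h hh; rwa [min_eq_right hQ1.le] at this
        have h1p : 1 / p h ≤ 1 / Q := one_div_le_one_div_of_le hQpos hpge
        linarith [hP', h1p, hQinv]
    calc variance (fun ω => ∑ h ∈ H, X h ω) μ
        ≤ (∑ h ∈ H, Real.sqrt (variance (X h) μ)) ^ 2 := aux_variance_sum_le μ H X hL2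
      _ ≤ (∑ _h ∈ H, Real.sqrt P) ^ 2 := by
          apply pow_le_pow_left₀ (Finset.sum_nonneg fun h _ => Real.sqrt_nonneg _)
          exact Finset.sum_le_sum fun h hh => Real.sqrt_le_sqrt (hvar h hh)
      _ = (H.card : ℝ) ^ 2 * P := by
          rw [Finset.sum_const, nsmul_eq_mul, mul_pow, Real.sq_sqrt hPnonneg]
end

section
/- For the normalized Laplacian L of a simple graph G with no isolated vertices, tr(L³) = |V_G| + Σ_{(u,v) ∈ E_G} 6/(d^u_G d^v_G) - Σ_{triangles {u,v,w}} 6/(d^u_G d^v_G d^w_G). -/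
open Finset

/-- The normalized Laplacian `L = I - D^{-1/2} A D^{-1/2}` of a simple graph:
`L u u = 1`, `L u v = -1/√(dᵘ dᵛ)` when `u ~ v`, and `0` otherwise. -/
noncomputable def normLap {V : Type*} [Fintype V] [DecidableEq V]
    (G : SimpleGraph V) [DecidableRel G.Adj] : Matrix V V ℝ :=
  fun u v =>
    if u = v then 1
    else if G.Adj u v then -(1 / Real.sqrt ((G.degree u : ℝ) * (G.degree v : ℝ)))
    else 0

/-- The symmetric edge weight `e ↦ c / (dᵘ · dᵛ)` for an edge `e = {u, v}`. -/
noncomputable def edgeTerm {V : Type*} [Fintype V] [DecidableEq V]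
    (G : SimpleGraph V) [DecidableRel G.Adj] (c : ℝ) : Sym2 V → ℝ :=
  Sym2.lift ⟨fun u v => c / ((G.degree u : ℝ) * (G.degree v : ℝ)),
    fun u v => by simp [mul_comm]⟩

section Aux

variable {V : Type*} [Fintype V] [DecidableEq V] (G : SimpleGraph V) [DecidableRel G.Adj]

/-- The normalized adjacency matrix `D^{-1/2} A D^{-1/2}`. -/
noncomputable def normAdj : Matrix V V ℝ :=
  fun u v => if G.Adj u v then 1 / Real.sqrt ((G.degree u : ℝ) * (G.degree v : ℝ)) else 0

lemma normLap_eq_one_sub : normLap G = 1 - normAdj G := by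
  ext u v
  by_cases h : u = v
  · subst h
    simp [normLap, normAdj, Matrix.one_apply]
  · simp [normLap, normAdj, Matrix.one_apply, h]
    split_ifs <;> simp

lemma sum_adj_pairs (f : V → V → ℝ) (hf : ∀ a b, f a b = f b a) :
    ∑ u : V, ∑ v : V, (if G.Adj u v then f u v else 0)
      = ∑ e ∈ G.edgeFinset, Sym2.lift ⟨f, hf⟩ e * 2 := by
  have h1 : ∑ u : V, ∑ v : V, (if G.Adj u v then f u v else 0)
      = ∑ p ∈ (univ ×ˢ univ : Finset (V × V)).filter (fun p => G.Adj p.1 p.2), f p.1 p.2 := by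
    rw [Finset.sum_filter, Finset.sum_product]
  rw [h1]
  rw [← Finset.sum_fiberwise_of_maps_to (g := fun p : V × V => s(p.1, p.2))
    (t := G.edgeFinset) (fun p hp => by
      simp only [mem_filter] at hp
      simpa [SimpleGraph.mem_edgeFinset] using hp.2)]
  refine Finset.sum_congr rfl fun e he => ?_
  induction e with
  | _ a b =>
    rw [SimpleGraph.mem_edgeFinset, SimpleGraph.mem_edgeSet] at he
    have hne : a ≠ b := he.ne
    have : ((univ ×ˢ univ : Finset (V × V)).filter (fun p => G.Adj p.1 p.2)).filter
        (fun p => s(p.1, p.2) = s(a, b)) = {(a, b), (b, a)} := by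
      ext ⟨x, y⟩
      simp only [mem_filter, mem_univ, mem_product, true_and, mem_insert, mem_singleton,
        Prod.mk.injEq, Sym2.mk_eq_mk_iff, Sym2.eq_iff, Prod.ext_iff, Prod.swap]
      constructor
      · rintro ⟨-, h | h⟩
        · exact Or.inl ⟨h.1, h.2⟩
        · right; exact ⟨h.1, h.2⟩
      · rintro (⟨rfl, rfl⟩ | ⟨rfl, rfl⟩)
        · exact ⟨he, Or.inl ⟨rfl, rfl⟩⟩
        · exact ⟨he.symm, Or.inr ⟨rfl, rfl⟩⟩
    rw [this, Finset.sum_pair (by simp [hne, Ne.symm hne])]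
    simp [hf a b]
    ring

lemma sum_adj_triples (f : V → ℝ) :
    ∑ u : V, ∑ v : V, ∑ w : V,
        (if G.Adj u v ∧ G.Adj v w ∧ G.Adj w u then f u * f v * f w else 0)
      = ∑ t ∈ G.cliqueFinset 3, 6 * ∏ x ∈ t, f x := by
  classical
  have h1 : ∑ u : V, ∑ v : V, ∑ w : V,
        (if G.Adj u v ∧ G.Adj v w ∧ G.Adj w u then f u * f v * f w else 0)
      = ∑ p ∈ (univ : Finset (V × V × V)).filter
          (fun p => G.Adj p.1 p.2.1 ∧ G.Adj p.2.1 p.2.2 ∧ G.Adj p.2.2 p.1),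
          f p.1 * f p.2.1 * f p.2.2 := by
    rw [Finset.sum_filter, Fintype.sum_prod_type]
    simp_rw [Fintype.sum_prod_type]
  rw [h1]
  rw [← Finset.sum_fiberwise_of_maps_to (g := fun p : V × V × V => ({p.1, p.2.1, p.2.2} : Finset V))
    (t := G.cliqueFinset 3) (fun p hp => by
      simp only [mem_filter, mem_univ, true_and] at hp
      rw [SimpleGraph.mem_cliqueFinset_iff]
      exact SimpleGraph.is3Clique_triple_iff.2 ⟨hp.1, hp.2.2.symm, hp.2.1⟩)]
  refine Finset.sum_congr rfl fun t ht => ?_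
  rw [SimpleGraph.mem_cliqueFinset_iff, SimpleGraph.is3Clique_iff] at ht
  obtain ⟨a, b, c, hab, hac, hbc, rfl⟩ := ht
  have hab' := hab.ne
  have hac' := hac.ne
  have hbc' := hbc.ne
  have hfib : ((univ : Finset (V × V × V)).filter
          (fun p => G.Adj p.1 p.2.1 ∧ G.Adj p.2.1 p.2.2 ∧ G.Adj p.2.2 p.1)).filter
          (fun p => ({p.1, p.2.1, p.2.2} : Finset V) = {a, b, c})
      = {(a,b,c), (a,c,b), (b,a,c), (b,c,a), (c,a,b), (c,b,a)} := by
    ext ⟨x, y, z⟩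
    simp only [mem_filter, mem_univ, true_and, mem_insert, mem_singleton, Prod.mk.injEq]
    constructor
    · rintro ⟨⟨hxy, hyz, hzx⟩, hset⟩
      have hx : x = a ∨ x = b ∨ x = c := by
        have : x ∈ ({a, b, c} : Finset V) := hset ▸ (by simp)
        simpa using this
      have hy : y = a ∨ y = b ∨ y = c := by
        have : y ∈ ({a, b, c} : Finset V) := hset ▸ (by simp)
        simpa using this
      have hz : z = a ∨ z = b ∨ z = c := by
        have : z ∈ ({a, b, c} : Finset V) := hset ▸ (by simp)
        simpa using this
      have ha : a ∈ ({x, y, z} : Finset V) := hset ▸ (by simp)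
      have hb : b ∈ ({x, y, z} : Finset V) := hset ▸ (by simp)
      have hc : c ∈ ({x, y, z} : Finset V) := hset ▸ (by simp)
      simp only [mem_insert, mem_singleton] at ha hb hc
      have hxy' := hxy.ne
      have hyz' := hyz.ne
      have hzx' := hzx.ne
      rcases hx with rfl | rfl | rfl <;> rcases hy with rfl | rfl | rfl <;>
        rcases hz with rfl | rfl | rfl <;> simp_all <;> tauto
    · rintro (⟨rfl,rfl,rfl⟩|⟨rfl,rfl,rfl⟩|⟨rfl,rfl,rfl⟩|⟨rfl,rfl,rfl⟩|⟨rfl,rfl,rfl⟩|⟨rfl,rfl,rfl⟩) <;>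
        refine ⟨⟨?_, ?_, ?_⟩, ?_⟩ <;>
        first
          | exact hab | exact hab.symm | exact hac | exact hac.symm
          | exact hbc | exact hbc.symm
          | (ext w; simp; try tauto)
  rw [hfib]
  have hprod : ∏ x ∈ ({a, b, c} : Finset V), f x = f a * f b * f c := by
    rw [Finset.prod_insert (by simp [hab', hac']), Finset.prod_insert (by simp [hbc']),
      Finset.prod_singleton, mul_assoc]
  rw [hprod]
  rw [show ({(a,b,c), (a,c,b), (b,a,c), (b,c,a), (c,a,b), (c,b,a)} : Finset (V×V×V))
      = {(a,b,c)} ∪ {(a,c,b)} ∪ {(b,a,c)} ∪ {(b,c,a)} ∪ {(c,a,b)} ∪ {(c,b,a)} from by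
        ext p; simp; try tauto]
  rw [Finset.sum_union (by simp [Prod.ext_iff]; try tauto),
    Finset.sum_union (by simp [Prod.ext_iff]; try tauto),
    Finset.sum_union (by simp [Prod.ext_iff]; try tauto),
    Finset.sum_union (by simp [Prod.ext_iff]; try tauto),
    Finset.sum_union (by simp [Prod.ext_iff]; try tauto)]
  simp only [Finset.sum_singleton]
  ring

lemma trace_normAdj : (normAdj G).trace = 0 := by
  simp [Matrix.trace, Matrix.diag, normAdj]

lemma trace_normAdj_sq :
    (normAdj G * normAdj G).trace
      = ∑ e ∈ G.edgeFinset,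
          Sym2.lift ⟨fun u v => 1 / ((G.degree u : ℝ) * (G.degree v : ℝ)),
            fun u v => by simp [mul_comm]⟩ e * 2 := by
  have h : (normAdj G * normAdj G).trace
      = ∑ u : V, ∑ v : V, normAdj G u v * normAdj G v u := by
    simp [Matrix.trace, Matrix.diag, Matrix.mul_apply]
  rw [h, ← sum_adj_pairs G (fun u v => 1 / ((G.degree u : ℝ) * (G.degree v : ℝ)))
    (fun u v => by simp [mul_comm])]
  refine Finset.sum_congr rfl fun u _ => Finset.sum_congr rfl fun v _ => ?_
  by_cases hadj : G.Adj u v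
  · simp only [normAdj, if_pos hadj, if_pos hadj.symm]
    rw [mul_comm ((G.degree v : ℝ)) ((G.degree u : ℝ)), div_mul_div_comm, one_mul,
      Real.mul_self_sqrt (by positivity)]
  · simp [normAdj, hadj, fun (h : G.Adj v u) => hadj h.symm]

lemma trace_normAdj_cube :
    (normAdj G * normAdj G * normAdj G).trace
      = ∑ t ∈ G.cliqueFinset 3, 6 * ∏ x ∈ t, (1 / (G.degree x : ℝ)) := by
  have h : (normAdj G * normAdj G * normAdj G).trace
      = ∑ u : V, ∑ v : V, ∑ w : V, normAdj G u v * normAdj G v w * normAdj G w u := by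
    simp only [Matrix.trace, Matrix.diag, Matrix.mul_apply, Finset.sum_mul]
    refine Finset.sum_congr rfl fun u _ => ?_
    rw [Finset.sum_comm]
  rw [h, ← sum_adj_triples G (fun x => 1 / (G.degree x : ℝ))]
  refine Finset.sum_congr rfl fun u _ => Finset.sum_congr rfl fun v _ =>
    Finset.sum_congr rfl fun w _ => ?_
  by_cases h1 : G.Adj u v
  · by_cases h2 : G.Adj v w
    · by_cases h3 : G.Adj w u
      · simp only [normAdj, if_pos h1, if_pos h2, if_pos h3, h1, h2, h3, and_self,
          if_true, true_and]
        have ha := Real.mul_self_sqrt (show (0:ℝ) ≤ (G.degree u : ℝ) by positivity)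
        have hb := Real.mul_self_sqrt (show (0:ℝ) ≤ (G.degree v : ℝ) by positivity)
        have hc := Real.mul_self_sqrt (show (0:ℝ) ≤ (G.degree w : ℝ) by positivity)
        have key : (1 / (Real.sqrt (G.degree u : ℝ) * Real.sqrt (G.degree v : ℝ))) *
            (1 / (Real.sqrt (G.degree v : ℝ) * Real.sqrt (G.degree w : ℝ))) *
            (1 / (Real.sqrt (G.degree w : ℝ) * Real.sqrt (G.degree u : ℝ)))
            = 1 / (Real.sqrt (G.degree u : ℝ) * Real.sqrt (G.degree u : ℝ)) *
              (1 / (Real.sqrt (G.degree v : ℝ) * Real.sqrt (G.degree v : ℝ))) *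
              (1 / (Real.sqrt (G.degree w : ℝ) * Real.sqrt (G.degree w : ℝ))) := by
          simp only [one_div, mul_inv]; ring
        rw [Real.sqrt_mul (by positivity), Real.sqrt_mul (by positivity),
          Real.sqrt_mul (by positivity), key, ha, hb, hc]
      · simp [normAdj, h3]
    · simp [normAdj, h2]
  · simp [normAdj, h1]

end Aux

/-- For the normalized Laplacian `L` of a simple graph `G` with no isolated vertices,
`tr(L³) = |V_G| + ∑_{(u,v) ∈ E_G} 6/(dᵘ dᵛ) - ∑_{triangles {u,v,w}} 6/(dᵘ dᵛ dʷ)`. -/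
theorem trace_normLap_cube
    {V : Type*} [Fintype V] [DecidableEq V]
    (G : SimpleGraph V) [DecidableRel G.Adj] (hdeg : ∀ v, 0 < G.degree v) :
    (normLap G ^ 3).trace =
      (Fintype.card V : ℝ) + ∑ e ∈ G.edgeFinset, edgeTerm G 6 e -
        ∑ t ∈ G.cliqueFinset 3, 6 / ∏ x ∈ t, (G.degree x : ℝ) := by
  set M := normAdj G with hM
  have hL : normLap G = 1 - M := normLap_eq_one_sub G
  have hexp : (1 - M) ^ 3 = 1 - (M + M + M) + (M * M + M * M + M * M) - M * M * M := by
    noncomm_ring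
  rw [hL, hexp]
  simp only [Matrix.trace_sub, Matrix.trace_add, Matrix.trace_one]
  rw [trace_normAdj, trace_normAdj_sq, trace_normAdj_cube]
  have hedge : ∑ e ∈ G.edgeFinset,
        Sym2.lift ⟨fun u v => 1 / ((G.degree u : ℝ) * (G.degree v : ℝ)),
          fun u v => by simp [mul_comm]⟩ e * 2
        + (∑ e ∈ G.edgeFinset,
        Sym2.lift ⟨fun u v => 1 / ((G.degree u : ℝ) * (G.degree v : ℝ)),
          fun u v => by simp [mul_comm]⟩ e * 2
        + ∑ e ∈ G.edgeFinset,
        Sym2.lift ⟨fun u v => 1 / ((G.degree u : ℝ) * (G.degree v : ℝ)),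
          fun u v => by simp [mul_comm]⟩ e * 2)
      = ∑ e ∈ G.edgeFinset, edgeTerm G 6 e := by
    rw [← Finset.sum_add_distrib, ← Finset.sum_add_distrib]
    refine Finset.sum_congr rfl fun e _ => ?_
    induction e with
    | _ a b => simp [edgeTerm]; ring
  have htri : ∑ t ∈ G.cliqueFinset 3, 6 * ∏ x ∈ t, (1 / (G.degree x : ℝ))
      = ∑ t ∈ G.cliqueFinset 3, 6 / ∏ x ∈ t, (G.degree x : ℝ) := by
    refine Finset.sum_congr rfl fun t _ => ?_
    rw [Finset.prod_div_distrib, Finset.prod_const_one]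
    rw [div_eq_mul_inv, div_eq_mul_inv, one_mul]
  linarith [hedge, htri]
end

section
/- For the normalized Laplacian L of a simple graph G with no isolated vertices, tr(L⁴) = |V_G| + Σ_{(u,v) ∈ E_G} [12/(d^u d^v) + 2/(d^u d^v)²] + Σ_{3-paths (u,v,w)} 4/(d^u (d^v)² d^w) - Σ_{triangles {u,v,w}} 24/(d^u d^v d^w) + Σ_{4-cycles (u,v,w,z)} 8/(d^u d^v d^w d^z), where the 3-path sum is over unordered paths u–v–w with u ≠ w and the 4-cycle sum is over unordered 4-cycles. -/
set_option maxHeartbeats 1000000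


/-- The symmetric edge weight `e ↦ c / (dᵘ · dᵛ)^k` for an edge `e = {u, v}`. -/
noncomputable def edgePow {V : Type*} [Fintype V] [DecidableEq V]
    (G : SimpleGraph V) [DecidableRel G.Adj] (c : ℝ) (k : ℕ) : Sym2 V → ℝ :=
  Sym2.lift ⟨fun u v => c / ((G.degree u : ℝ) * (G.degree v : ℝ)) ^ k,
    fun u v => by simp [mul_comm]⟩

open Finset

/-- Sum of a symmetric weight over ordered adjacent pairs is twice the edge sum. -/
lemma sum_adj_eq_two_mul_edgePow {V : Type*} [Fintype V] [DecidableEq V]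
    (G : SimpleGraph V) [DecidableRel G.Adj] (c : ℝ) (k : ℕ) :
    (∑ u, ∑ v, if G.Adj u v then c * (((G.degree u : ℝ) * (G.degree v : ℝ)) ^ k)⁻¹ else 0)
      = 2 * ∑ e ∈ G.edgeFinset, edgePow G c k e := by
  classical
  have h1 : (∑ u, ∑ v, if G.Adj u v then
        c * (((G.degree u : ℝ) * (G.degree v : ℝ)) ^ k)⁻¹ else 0)
      = ∑ p ∈ (univ : Finset (V × V)).filter (fun p => G.Adj p.1 p.2),
          c * (((G.degree p.1 : ℝ) * (G.degree p.2 : ℝ)) ^ k)⁻¹ := by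
    rw [sum_filter]
    exact (Fintype.sum_prod_type (f := fun p : V × V => if G.Adj p.1 p.2 then
      c * (((G.degree p.1 : ℝ) * (G.degree p.2 : ℝ)) ^ k)⁻¹ else 0)).symm
  rw [h1, ← Finset.sum_fiberwise_of_maps_to
    (g := fun p : V × V => s(p.1, p.2)) (t := G.edgeFinset)
    (fun p hp => by
      simp only [mem_filter, mem_univ, true_and] at hp
      simpa [SimpleGraph.mem_edgeFinset] using hp)]
  rw [Finset.mul_sum]
  refine Finset.sum_congr rfl fun e he => ?_
  revert he
  refine Sym2.inductionOn e ?_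
  intro a b hab
  rw [SimpleGraph.mem_edgeFinset, SimpleGraph.mem_edgeSet] at hab
  have hset : ((univ : Finset (V × V)).filter (fun p => G.Adj p.1 p.2)).filter
      (fun p => s(p.1, p.2) = s(a, b)) = {(a, b), (b, a)} := by
    ext ⟨x, y⟩
    simp only [mem_filter, mem_univ, true_and, mem_insert, mem_singleton,
      Prod.mk.injEq, Sym2.eq_iff]
    constructor
    · rintro ⟨-, (⟨rfl, rfl⟩ | ⟨rfl, rfl⟩)⟩
      · left; exact ⟨rfl, rfl⟩
      · right; exact ⟨rfl, rfl⟩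
    · rintro (⟨rfl, rfl⟩ | ⟨rfl, rfl⟩)
      · exact ⟨hab, Or.inl ⟨rfl, rfl⟩⟩
      · exact ⟨hab.symm, Or.inr ⟨rfl, rfl⟩⟩
  rw [hset, Finset.sum_pair (by simp [Prod.ext_iff, hab.ne, hab.ne.symm])]
  have : edgePow G c k s(a, b) = c / ((G.degree a : ℝ) * (G.degree b : ℝ)) ^ k := rfl
  rw [this, mul_comm (G.degree b : ℝ) (G.degree a : ℝ), div_eq_mul_inv]
  ring

/-- Sum of a symmetric weight over ordered triangles is six times the triangle sum. -/
lemma sum_tri_eq_six_mul {V : Type*} [Fintype V] [DecidableEq V]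
    (G : SimpleGraph V) [DecidableRel G.Adj] (c : ℝ) :
    (∑ u, ∑ v, ∑ w, if G.Adj u v ∧ G.Adj u w ∧ G.Adj v w then
        c * ((G.degree u : ℝ) * (G.degree v : ℝ) * (G.degree w : ℝ))⁻¹ else 0)
      = ∑ t ∈ G.cliqueFinset 3, (6 * c) / ∏ x ∈ t, (G.degree x : ℝ) := by
  classical
  have h1 : (∑ u, ∑ v, ∑ w, if G.Adj u v ∧ G.Adj u w ∧ G.Adj v w then
        c * ((G.degree u : ℝ) * (G.degree v : ℝ) * (G.degree w : ℝ))⁻¹ else 0)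
      = ∑ p ∈ (univ : Finset (V × V × V)).filter
          (fun p => G.Adj p.1 p.2.1 ∧ G.Adj p.1 p.2.2 ∧ G.Adj p.2.1 p.2.2),
          c * ((G.degree p.1 : ℝ) * (G.degree p.2.1 : ℝ) * (G.degree p.2.2 : ℝ))⁻¹ := by
    rw [sum_filter]
    refine ((Fintype.sum_prod_type (f := fun p : V × V × V => if G.Adj p.1 p.2.1 ∧ G.Adj p.1 p.2.2 ∧ G.Adj p.2.1 p.2.2 then
      c * ((G.degree p.1 : ℝ) * (G.degree p.2.1 : ℝ) * (G.degree p.2.2 : ℝ))⁻¹ else 0)).trans ?_).symm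
    refine Finset.sum_congr rfl fun u _ => Fintype.sum_prod_type (f := fun q : V × V => if G.Adj u q.1 ∧ G.Adj u q.2 ∧ G.Adj q.1 q.2 then
      c * ((G.degree u : ℝ) * (G.degree q.1 : ℝ) * (G.degree q.2 : ℝ))⁻¹ else 0)
  rw [h1, ← Finset.sum_fiberwise_of_maps_to
    (g := fun p : V × V × V => ({p.1, p.2.1, p.2.2} : Finset V)) (t := G.cliqueFinset 3)
    (fun p hp => by
      simp only [mem_filter, mem_univ, true_and] at hp
      rw [SimpleGraph.mem_cliqueFinset_iff]
      exact SimpleGraph.is3Clique_triple_iff.2 hp)]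
  refine Finset.sum_congr rfl fun t ht => ?_
  obtain ⟨a, b, c', hab, hac, hbc, rfl⟩ :=
    SimpleGraph.is3Clique_iff.1 (SimpleGraph.mem_cliqueFinset_iff.1 ht)
  have hab' : a ≠ b := hab.ne
  have hac' : a ≠ c' := hac.ne
  have hbc' : b ≠ c' := hbc.ne
  have hset : (((univ : Finset (V × V × V)).filter
      (fun p => G.Adj p.1 p.2.1 ∧ G.Adj p.1 p.2.2 ∧ G.Adj p.2.1 p.2.2)).filter
      (fun p => ({p.1, p.2.1, p.2.2} : Finset V) = {a, b, c'}))
      = {(a, b, c'), (a, c', b), (b, a, c'), (b, c', a), (c', a, b), (c', b, a)} := by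
    ext ⟨x, y, z⟩
    simp only [mem_filter, mem_univ, true_and, mem_insert, mem_singleton, Prod.mk.injEq]
    constructor
    · rintro ⟨⟨h1', h2', h3'⟩, hs⟩
      have hx : x ∈ ({a, b, c'} : Finset V) := by rw [← hs]; simp
      have hy : y ∈ ({a, b, c'} : Finset V) := by rw [← hs]; simp
      have hz : z ∈ ({a, b, c'} : Finset V) := by rw [← hs]; simp
      have hxy : x ≠ y := h1'.ne
      have hxz : x ≠ z := h2'.ne
      have hyz : y ≠ z := h3'.ne
      simp only [mem_insert, mem_singleton] at hx hy hz
      rcases hx with rfl | rfl | rfl <;> rcases hy with rfl | rfl | rfl <;>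
        rcases hz with rfl | rfl | rfl <;> simp_all
    · have e1 : ({a, c', b} : Finset V) = {a, b, c'} := by ext w; simp; tauto
      have e2 : ({b, a, c'} : Finset V) = {a, b, c'} := by ext w; simp; tauto
      have e3 : ({b, c', a} : Finset V) = {a, b, c'} := by ext w; simp; tauto
      have e4 : ({c', a, b} : Finset V) = {a, b, c'} := by ext w; simp; tauto
      have e5 : ({c', b, a} : Finset V) = {a, b, c'} := by ext w; simp; tauto
      rintro (⟨h1, h2, h3⟩ | ⟨h1, h2, h3⟩ | ⟨h1, h2, h3⟩ | ⟨h1, h2, h3⟩ |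
        ⟨h1, h2, h3⟩ | ⟨h1, h2, h3⟩) <;> rw [h1, h2, h3]
      · exact ⟨⟨hab, hac, hbc⟩, rfl⟩
      · exact ⟨⟨hac, hab, hbc.symm⟩, e1⟩
      · exact ⟨⟨hab.symm, hbc, hac⟩, e2⟩
      · exact ⟨⟨hbc, hab.symm, hac.symm⟩, e3⟩
      · exact ⟨⟨hac.symm, hbc.symm, hab⟩, e4⟩
      · exact ⟨⟨hbc.symm, hac.symm, hab.symm⟩, e5⟩
  rw [hset]
  have hprod : ∏ x ∈ ({a, b, c'} : Finset V), (G.degree x : ℝ)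
      = (G.degree a : ℝ) * (G.degree b : ℝ) * (G.degree c' : ℝ) := by
    rw [Finset.prod_insert (by simp [hab', hac']),
      Finset.prod_insert (by simp [hbc']), Finset.prod_singleton, mul_assoc]
  rw [hprod]
  rw [Finset.sum_insert (by simp [Prod.ext_iff, hab', hac', hbc', hab'.symm, hac'.symm, hbc'.symm]),
    Finset.sum_insert (by simp [Prod.ext_iff, hab', hac', hbc', hab'.symm, hac'.symm, hbc'.symm]),
    Finset.sum_insert (by simp [Prod.ext_iff, hab', hac', hbc', hab'.symm, hac'.symm, hbc'.symm]),
    Finset.sum_insert (by simp [Prod.ext_iff, hab', hac', hbc', hab'.symm, hac'.symm, hbc'.symm]),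
    Finset.sum_insert (by simp [Prod.ext_iff, hab', hac', hbc', hab'.symm, hac'.symm, hbc'.symm]),
    Finset.sum_singleton]
  field_simp
  ring

/-- For the normalized Laplacian `L` of a simple graph `G` with no isolated vertices,
`tr(L⁴) = |V_G| + ∑_{(u,v) ∈ E_G} [12/(dᵘ dᵛ) + 2/(dᵘ dᵛ)²]
        + ∑_{3-paths u–v–w} 4/(dᵘ (dᵛ)² dʷ) - ∑_{triangles {u,v,w}} 24/(dᵘ dᵛ dʷ)
        + ∑_{4-cycles (u,v,w,z)} 8/(dᵘ dᵛ dʷ dᶻ)`.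
Here the unordered 3-path sum is written as an ordered sum over triples `(v, u, w)` with
`u, w` distinct neighbors of the middle vertex `v` (each unordered path counted twice,
so with weight `2` instead of `4`), and the unordered 4-cycle sum as an ordered sum over
cyclically adjacent pairwise-distinct quadruples (each unordered 4-cycle counted eight
times, so with weight `1` instead of `8`). -/
theorem trace_normLap_fourth
    {V : Type*} [Fintype V] [DecidableEq V]
    (G : SimpleGraph V) [DecidableRel G.Adj] (hdeg : ∀ v, 0 < G.degree v) :
    (normLap G ^ 4).trace =
      (Fintype.card V : ℝ)
        + ∑ e ∈ G.edgeFinset, (edgePow G 12 1 e + edgePow G 2 2 e)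
        + (∑ v, ∑ u, ∑ w,
            if G.Adj v u ∧ G.Adj v w ∧ u ≠ w then
              2 / ((G.degree u : ℝ) * (G.degree v : ℝ) ^ 2 * (G.degree w : ℝ))
            else 0)
        - ∑ t ∈ G.cliqueFinset 3, 24 / ∏ x ∈ t, (G.degree x : ℝ)
        + (∑ u, ∑ v, ∑ w, ∑ z,
            if G.Adj u v ∧ G.Adj v w ∧ G.Adj w z ∧ G.Adj z u ∧
                u ≠ v ∧ u ≠ w ∧ u ≠ z ∧ v ≠ w ∧ v ≠ z ∧ w ≠ z then
              1 / ((G.degree u : ℝ) * (G.degree v : ℝ) * (G.degree w : ℝ) *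
                (G.degree z : ℝ))
            else 0) := by
  classical
  set B : Matrix V V ℝ := Matrix.of fun u v =>
    if G.Adj u v then ((Real.sqrt (G.degree u)) * (Real.sqrt (G.degree v)))⁻¹ else 0 with hBdef
  have hd : ∀ v, (0:ℝ) < (G.degree v : ℝ) := fun v => by exact_mod_cast hdeg v
  have hss : ∀ v, Real.sqrt (G.degree v) * Real.sqrt (G.degree v) = (G.degree v : ℝ) :=
    fun v => Real.mul_self_sqrt (hd v).le
  -- `normLap G = 1 - B`
  have hL : normLap G = 1 - B := by
    ext u v
    by_cases h : u = v
    · subst h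
      simp [normLap, hBdef, Matrix.one_apply, Matrix.sub_apply]
    · by_cases ha : G.Adj u v
      · simp [normLap, hBdef, Matrix.one_apply, Matrix.sub_apply, h, ha,
          Real.sqrt_mul (Nat.cast_nonneg _), one_div]
      · simp [normLap, hBdef, Matrix.one_apply, Matrix.sub_apply, h, ha]
  have hexp : (1 - B)^4 = 1 - 4*B + 6*(B*B) - 4*(B*B*B) + B*B*B*B := by noncomm_ring
  have h4 : ∀ M : Matrix V V ℝ, ((4:Matrix V V ℝ)*M).trace = 4 * M.trace := by
    intro M
    rw [show (4:Matrix V V ℝ)*M = M+M+M+M by noncomm_ring]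
    simp [Matrix.trace_add]; ring
  have h6 : ∀ M : Matrix V V ℝ, ((6:Matrix V V ℝ)*M).trace = 6 * M.trace := by
    intro M
    rw [show (6:Matrix V V ℝ)*M = M+M+M+M+M+M by noncomm_ring]
    simp [Matrix.trace_add]; ring
  have htrace : (normLap G ^ 4).trace
      = (Fintype.card V : ℝ) - 4 * B.trace + 6 * (B*B).trace - 4 * (B*B*B).trace
        + (B*B*B*B).trace := by
    rw [hL, hexp, Matrix.trace_add, Matrix.trace_sub, Matrix.trace_add, Matrix.trace_sub,
      Matrix.trace_one, h4, h6, h4]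
  have hsi : ∀ x : V, (Real.sqrt (G.degree x))⁻¹ * (Real.sqrt (G.degree x))⁻¹
      = ((G.degree x : ℝ))⁻¹ := fun x => by rw [← mul_inv, hss]
  -- entry product lemmas
  have hB2 : ∀ a b, B a b * B b a
      = if G.Adj a b then ((G.degree a : ℝ) * (G.degree b : ℝ))⁻¹ else 0 := by
    intro a b
    by_cases h : G.Adj a b
    · simp only [hBdef, Matrix.of_apply, if_pos h, if_pos h.symm]
      simp only [mul_inv]
      rw [← hsi a, ← hsi b]; ring
    · have h' : ¬ G.Adj b a := fun hh => h hh.symm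
      simp [hBdef, h, h']
  have hB3 : ∀ a b c, B a b * B b c * B c a
      = if G.Adj a b ∧ G.Adj a c ∧ G.Adj b c then
          ((G.degree a : ℝ) * (G.degree b : ℝ) * (G.degree c : ℝ))⁻¹ else 0 := by
    intro a b c
    by_cases h1 : G.Adj a b <;> by_cases h2 : G.Adj b c <;> by_cases h3 : G.Adj a c
    · simp only [hBdef, Matrix.of_apply, if_pos h1, if_pos h2, if_pos h3.symm,
        if_pos (show G.Adj a b ∧ G.Adj a c ∧ G.Adj b c from ⟨h1, h3, h2⟩)]
      simp only [mul_inv]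
      rw [← hsi a, ← hsi b, ← hsi c]; ring
    all_goals first
      | (have h3' : ¬ G.Adj c a := fun hh => h3 hh.symm
         simp [hBdef, h1, h2, h3, h3'])
      | simp [hBdef, h1, h2, h3, h3.symm]
  have hB4 : ∀ a b c e, B a b * B b c * B c e * B e a
      = if G.Adj a b ∧ G.Adj b c ∧ G.Adj c e ∧ G.Adj e a then
          ((G.degree a : ℝ) * (G.degree b : ℝ) * (G.degree c : ℝ) * (G.degree e : ℝ))⁻¹
        else 0 := by
    intro a b c e
    by_cases h1 : G.Adj a b <;> by_cases h2 : G.Adj b c <;> by_cases h3 : G.Adj c e <;>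
      by_cases h4' : G.Adj e a
    · simp only [hBdef, Matrix.of_apply, if_pos h1, if_pos h2, if_pos h3, if_pos h4',
        if_pos (show G.Adj a b ∧ G.Adj b c ∧ G.Adj c e ∧ G.Adj e a from ⟨h1, h2, h3, h4'⟩)]
      simp only [mul_inv]
      rw [← hsi a, ← hsi b, ← hsi c, ← hsi e]; ring
    all_goals simp [hBdef, h1, h2, h3, h4']
  -- traces of powers of B
  have htr1 : B.trace = 0 := by
    simp [Matrix.trace, Matrix.diag, hBdef]
  have htr2 : (B*B).trace
      = ∑ a, ∑ b, if G.Adj a b then ((G.degree a : ℝ) * (G.degree b : ℝ))⁻¹ else 0 := by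
    simp only [Matrix.trace, Matrix.diag, Matrix.mul_apply]
    exact Finset.sum_congr rfl fun a _ => Finset.sum_congr rfl fun b _ => hB2 a b
  have htr3 : (B*B*B).trace
      = ∑ a, ∑ b, ∑ c, if G.Adj a b ∧ G.Adj a c ∧ G.Adj b c then
          ((G.degree a : ℝ) * (G.degree b : ℝ) * (G.degree c : ℝ))⁻¹ else 0 := by
    simp only [Matrix.trace, Matrix.diag, Matrix.mul_apply, Finset.sum_mul]
    refine Finset.sum_congr rfl fun a _ => Finset.sum_congr rfl fun b _ =>
      Finset.sum_congr rfl fun c _ => ?_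
    rw [hB3 a c b]
    exact if_congr ⟨fun ⟨p, q, r⟩ => ⟨q, p, r.symm⟩, fun ⟨p, q, r⟩ => ⟨q, p, r.symm⟩⟩
      (by ring) rfl
  have htr4 : (B*B*B*B).trace
      = ∑ a, ∑ b, ∑ c, ∑ e, if G.Adj a b ∧ G.Adj b c ∧ G.Adj c e ∧ G.Adj e a then
          ((G.degree a : ℝ) * (G.degree b : ℝ) * (G.degree c : ℝ) * (G.degree e : ℝ))⁻¹
        else 0 := by
    simp only [Matrix.trace, Matrix.diag, Matrix.mul_apply, Finset.sum_mul]
    refine Finset.sum_congr rfl fun a _ => Finset.sum_congr rfl fun b _ =>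
      Finset.sum_congr rfl fun c _ => Finset.sum_congr rfl fun e _ => ?_
    rw [hB4 a e c b]
    exact if_congr
      ⟨fun ⟨p, q, r, s⟩ => ⟨s.symm, r.symm, q.symm, p.symm⟩,
       fun ⟨p, q, r, s⟩ => ⟨s.symm, r.symm, q.symm, p.symm⟩⟩ (by ring) rfl
  -- pointwise decomposition of the closed 4-walk weight
  have hpt : ∀ a b c e : V,
      (if G.Adj a b ∧ G.Adj b c ∧ G.Adj c e ∧ G.Adj e a then
          ((G.degree a : ℝ) * (G.degree b : ℝ) * (G.degree c : ℝ) * (G.degree e : ℝ))⁻¹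
        else 0)
      = (if e = b then (if c = a then
            (if G.Adj a b then (((G.degree a : ℝ) * (G.degree b : ℝ)) ^ 2)⁻¹ else 0)
          else 0) else 0)
      + (if c = a then (if G.Adj a b ∧ G.Adj a e ∧ b ≠ e then
            ((G.degree b : ℝ) * (G.degree a : ℝ) ^ 2 * (G.degree e : ℝ))⁻¹ else 0) else 0)
      + (if e = b then (if G.Adj a b ∧ G.Adj b c ∧ a ≠ c then
            ((G.degree a : ℝ) * (G.degree b : ℝ) ^ 2 * (G.degree c : ℝ))⁻¹ else 0) else 0)
      + (if G.Adj a b ∧ G.Adj b c ∧ G.Adj c e ∧ G.Adj e a ∧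
            a ≠ b ∧ a ≠ c ∧ a ≠ e ∧ b ≠ c ∧ b ≠ e ∧ c ≠ e then
          1 / ((G.degree a : ℝ) * (G.degree b : ℝ) * (G.degree c : ℝ) * (G.degree e : ℝ))
        else 0) := by
    intro a b c e
    by_cases hc : c = a <;> by_cases he : e = b
    · rw [hc, he]
      by_cases hab : G.Adj a b
      · simp [hab, hab.symm]
        try ring_nf
      · simp [hab]
    · rw [hc]
      by_cases hab : G.Adj a b <;> by_cases hae : G.Adj a e
      · simp [hab, hae, hab.symm, hae.symm, he, Ne.symm he]
        try ring_nf
        try exact Or.inl trivial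
      · simp [hab, hae, he]
      · simp [hab, hae, he]
      · simp [hab, hae, he]
    · rw [he]
      by_cases hab : G.Adj a b <;> by_cases hbc : G.Adj b c
      · simp [hab, hbc, hab.symm, hbc.symm, hc, Ne.symm hc]
        try ring_nf
      · simp [hab, hbc, hc]
      · simp [hab, hbc, hc]
      · simp [hab, hbc, hc]
    · by_cases hch : G.Adj a b ∧ G.Adj b c ∧ G.Adj c e ∧ G.Adj e a
      · obtain ⟨p, q, r, s⟩ := hch
        simp [p, q, r, s, p.ne, q.ne, r.ne, Ne.symm s.ne, Ne.symm hc, Ne.symm he, hc, he,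
          one_div]
      · have h4c : ¬(G.Adj a b ∧ G.Adj b c ∧ G.Adj c e ∧ G.Adj e a ∧
            a ≠ b ∧ a ≠ c ∧ a ≠ e ∧ b ≠ c ∧ b ≠ e ∧ c ≠ e) :=
          fun h => hch ⟨h.1, h.2.1, h.2.2.1, h.2.2.2.1⟩
        simp [hch, h4c, hc, he]
  -- decomposition of the 4-walk sum
  have hQ : (∑ a, ∑ b, ∑ c, ∑ e, if G.Adj a b ∧ G.Adj b c ∧ G.Adj c e ∧ G.Adj e a then
          ((G.degree a : ℝ) * (G.degree b : ℝ) * (G.degree c : ℝ) * (G.degree e : ℝ))⁻¹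
        else 0)
      = (∑ a, ∑ b, if G.Adj a b then (((G.degree a : ℝ) * (G.degree b : ℝ)) ^ 2)⁻¹ else 0)
      + (∑ a, ∑ b, ∑ e, if G.Adj a b ∧ G.Adj a e ∧ b ≠ e then
            ((G.degree b : ℝ) * (G.degree a : ℝ) ^ 2 * (G.degree e : ℝ))⁻¹ else 0)
      + (∑ a, ∑ b, ∑ c, if G.Adj a b ∧ G.Adj b c ∧ a ≠ c then
            ((G.degree a : ℝ) * (G.degree b : ℝ) ^ 2 * (G.degree c : ℝ))⁻¹ else 0)
      + (∑ u, ∑ v, ∑ w, ∑ z,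
            if G.Adj u v ∧ G.Adj v w ∧ G.Adj w z ∧ G.Adj z u ∧
                u ≠ v ∧ u ≠ w ∧ u ≠ z ∧ v ≠ w ∧ v ≠ z ∧ w ≠ z then
              1 / ((G.degree u : ℝ) * (G.degree v : ℝ) * (G.degree w : ℝ) *
                (G.degree z : ℝ))
            else 0) := by
    have h1 : (∑ a, ∑ b, ∑ c, ∑ e, if G.Adj a b ∧ G.Adj b c ∧ G.Adj c e ∧ G.Adj e a then
          ((G.degree a : ℝ) * (G.degree b : ℝ) * (G.degree c : ℝ) * (G.degree e : ℝ))⁻¹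
        else 0)
        = ∑ a, ∑ b, ∑ c, ∑ e,
          ((if e = b then (if c = a then
              (if G.Adj a b then (((G.degree a : ℝ) * (G.degree b : ℝ)) ^ 2)⁻¹ else 0)
            else 0) else 0)
          + (if c = a then (if G.Adj a b ∧ G.Adj a e ∧ b ≠ e then
              ((G.degree b : ℝ) * (G.degree a : ℝ) ^ 2 * (G.degree e : ℝ))⁻¹ else 0) else 0)
          + (if e = b then (if G.Adj a b ∧ G.Adj b c ∧ a ≠ c then
              ((G.degree a : ℝ) * (G.degree b : ℝ) ^ 2 * (G.degree c : ℝ))⁻¹ else 0) else 0)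
          + (if G.Adj a b ∧ G.Adj b c ∧ G.Adj c e ∧ G.Adj e a ∧
                a ≠ b ∧ a ≠ c ∧ a ≠ e ∧ b ≠ c ∧ b ≠ e ∧ c ≠ e then
              1 / ((G.degree a : ℝ) * (G.degree b : ℝ) * (G.degree c : ℝ) * (G.degree e : ℝ))
            else 0)) :=
      Finset.sum_congr rfl fun a _ => Finset.sum_congr rfl fun b _ =>
        Finset.sum_congr rfl fun c _ => Finset.sum_congr rfl fun e _ => hpt a b c e
    rw [h1]
    simp only [Finset.sum_add_distrib]
    congr 1
    congr 1
    congr 1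
    · refine Finset.sum_congr rfl fun a _ => Finset.sum_congr rfl fun b _ => ?_
      simp [Finset.sum_ite_eq']
    · refine Finset.sum_congr rfl fun a _ => Finset.sum_congr rfl fun b _ => ?_
      rw [Finset.sum_comm]
      simp [Finset.sum_ite_eq']
    · refine Finset.sum_congr rfl fun a _ => Finset.sum_congr rfl fun b _ =>
        Finset.sum_congr rfl fun c _ => ?_
      simp [Finset.sum_ite_eq']
  -- edge-sum conversions
  have hE12 : (∑ e ∈ G.edgeFinset, edgePow G 12 1 e) = 6 * (B*B).trace := by
    have h := sum_adj_eq_two_mul_edgePow G 12 1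
    have h2 : (∑ u, ∑ v, if G.Adj u v then
          (12:ℝ) * (((G.degree u : ℝ) * (G.degree v : ℝ)) ^ 1)⁻¹ else 0)
        = 12 * ∑ u, ∑ v, if G.Adj u v then ((G.degree u : ℝ) * (G.degree v : ℝ))⁻¹ else 0 := by
      rw [Finset.mul_sum]
      refine Finset.sum_congr rfl fun u _ => ?_
      rw [Finset.mul_sum]
      refine Finset.sum_congr rfl fun v _ => ?_
      split_ifs <;> simp [pow_one]
    rw [htr2]
    linarith
  have hE22 : (∑ e ∈ G.edgeFinset, edgePow G 2 2 e)
      = ∑ a, ∑ b, if G.Adj a b then (((G.degree a : ℝ) * (G.degree b : ℝ)) ^ 2)⁻¹ else 0 := by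
    have h := sum_adj_eq_two_mul_edgePow G 2 2
    have h2 : (∑ u, ∑ v, if G.Adj u v then
          (2:ℝ) * (((G.degree u : ℝ) * (G.degree v : ℝ)) ^ 2)⁻¹ else 0)
        = 2 * ∑ u, ∑ v, if G.Adj u v then
            (((G.degree u : ℝ) * (G.degree v : ℝ)) ^ 2)⁻¹ else 0 := by
      rw [Finset.mul_sum]
      refine Finset.sum_congr rfl fun u _ => ?_
      rw [Finset.mul_sum]
      refine Finset.sum_congr rfl fun v _ => ?_
      split_ifs <;> simp
    linarith
  -- triangle conversion
  have hTri : (∑ t ∈ G.cliqueFinset 3, 24 / ∏ x ∈ t, (G.degree x : ℝ))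
      = 4 * (B*B*B).trace := by
    have h := sum_tri_eq_six_mul G 4
    have h2 : (∑ u, ∑ v, ∑ w, if G.Adj u v ∧ G.Adj u w ∧ G.Adj v w then
          (4:ℝ) * ((G.degree u : ℝ) * (G.degree v : ℝ) * (G.degree w : ℝ))⁻¹ else 0)
        = 4 * ∑ u, ∑ v, ∑ w, if G.Adj u v ∧ G.Adj u w ∧ G.Adj v w then
            ((G.degree u : ℝ) * (G.degree v : ℝ) * (G.degree w : ℝ))⁻¹ else 0 := by
      rw [Finset.mul_sum]
      refine Finset.sum_congr rfl fun u _ => ?_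
      rw [Finset.mul_sum]
      refine Finset.sum_congr rfl fun v _ => ?_
      rw [Finset.mul_sum]
      refine Finset.sum_congr rfl fun w _ => ?_
      split_ifs <;> simp
    have h3 : (∑ t ∈ G.cliqueFinset 3, (6*4:ℝ) / ∏ x ∈ t, (G.degree x : ℝ))
        = ∑ t ∈ G.cliqueFinset 3, 24 / ∏ x ∈ t, (G.degree x : ℝ) :=
      Finset.sum_congr rfl fun t _ => by norm_num
    rw [htr3]
    linarith
  -- path conversion
  have hTP : (∑ v, ∑ u, ∑ w,
        if G.Adj v u ∧ G.Adj v w ∧ u ≠ w then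
          2 / ((G.degree u : ℝ) * (G.degree v : ℝ) ^ 2 * (G.degree w : ℝ))
        else 0)
      = (∑ a, ∑ b, ∑ e, if G.Adj a b ∧ G.Adj a e ∧ b ≠ e then
            ((G.degree b : ℝ) * (G.degree a : ℝ) ^ 2 * (G.degree e : ℝ))⁻¹ else 0)
      + (∑ a, ∑ b, ∑ c, if G.Adj a b ∧ G.Adj b c ∧ a ≠ c then
            ((G.degree a : ℝ) * (G.degree b : ℝ) ^ 2 * (G.degree c : ℝ))⁻¹ else 0) := by
    have hsw : (∑ a, ∑ b, ∑ c, if G.Adj a b ∧ G.Adj b c ∧ a ≠ c then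
            ((G.degree a : ℝ) * (G.degree b : ℝ) ^ 2 * (G.degree c : ℝ))⁻¹ else 0)
        = ∑ a, ∑ b, ∑ c, if G.Adj b a ∧ G.Adj a c ∧ b ≠ c then
            ((G.degree b : ℝ) * (G.degree a : ℝ) ^ 2 * (G.degree c : ℝ))⁻¹ else 0 :=
      Finset.sum_comm
    rw [hsw, ← Finset.sum_add_distrib]
    refine Finset.sum_congr rfl fun a _ => ?_
    rw [← Finset.sum_add_distrib]
    refine Finset.sum_congr rfl fun b _ => ?_
    rw [← Finset.sum_add_distrib]
    refine Finset.sum_congr rfl fun c _ => ?_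
    by_cases h : G.Adj a b ∧ G.Adj a c ∧ b ≠ c
    · obtain ⟨p, q, r⟩ := h
      simp [p, q, r, p.symm]
      rw [div_eq_mul_inv]
      ring
    · have h' : ¬(G.Adj b a ∧ G.Adj a c ∧ b ≠ c) := fun hh => h ⟨hh.1.symm, hh.2.1, hh.2.2⟩
      simp [h, h']
  -- assemble
  rw [htrace, htr1, htr4, hQ, Finset.sum_add_distrib, hTP]
  rw [hE12, hE22, hTri]
  ring
end
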